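/- Let D ⊆ ℝ² be open, let q, r, q̄, r̄, φ : D → ℂ be differentiable functions satisfying the mPLR system, let α, β ∈ ℂ, and let λ > 0 be real. Set D_λ := {(t, t̄) ∈ ℝ² : (λt, λ⁻¹t̄) ∈ D} and define on D_λ the functions q̃(t,t̄) := λ^{2α+1}·q(λt, λ⁻¹t̄), r̃(t,t̄) := λ^{−2α}·r(λt, λ⁻¹t̄), q̄̃(t,t̄) := λ^{2β}·q̄(λt, λ⁻¹t̄), r̄̃(t,t̄) := λ^{−2β−1}·r̄(λt, λ⁻¹t̄), and φ̃(t,t̄) := φ(λt, λ⁻¹t̄) + (α − β)·log λ, where λ^{w} := exp(w·log λ) for w ∈ ℂ. Then (q̃, r̃, q̄̃, r̄̃, φ̃) also satisfies the mPLR system on D_λ. -/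

import Mathlib

/-- Partial derivative with respect to the first coordinate `t`. -/
noncomputable def pd1 (f : ℝ × ℝ → ℂ) : ℝ × ℝ → ℂ :=
  fun p => fderiv ℝ f p ((1 : ℝ), (0 : ℝ))

/-- Partial derivative with respect to the second coordinate `t̄`. -/
noncomputable def pd2 (f : ℝ × ℝ → ℂ) : ℝ × ℝ → ℂ :=
  fun p => fderiv ℝ f p ((0 : ℝ), (1 : ℝ))

/-- The modified Pohlmeyer–Lund–Regge system on a set `D ⊆ ℝ²`. -/
def mPLR (D : Set (ℝ × ℝ)) (q r qb rb φ : ℝ × ℝ → ℂ) : Prop :=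
  ∀ p ∈ D,
    pd2 q p = -2 * qb p * Complex.exp (2 * φ p) ∧
    pd2 r p = 2 * rb p * Complex.exp (-2 * φ p) ∧
    pd1 φ p = 2 * q p * r p ∧
    pd2 φ p = -2 * qb p * rb p ∧
    pd1 qb p = -2 * q p * Complex.exp (-2 * φ p) ∧
    pd1 rb p = 2 * r p * Complex.exp (2 * φ p)

/-- `λ^w := exp (w · log λ)` for real `λ > 0` and complex `w`. -/
noncomputable def cpowR (lam : ℝ) (w : ℂ) : ℂ := Complex.exp (w * Real.log lam)

noncomputable def Lmap (lam : ℝ) : (ℝ × ℝ) →L[ℝ] (ℝ × ℝ) :=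
  (lam • ContinuousLinearMap.fst ℝ ℝ ℝ).prod (lam⁻¹ • ContinuousLinearMap.snd ℝ ℝ ℝ)

lemma Lmap_apply (lam : ℝ) (p : ℝ × ℝ) : Lmap lam p = (lam * p.1, lam⁻¹ * p.2) := rfl

lemma comp_fderiv (lam : ℝ) (f : ℝ × ℝ → ℂ) (x : ℝ × ℝ)
    (hf : DifferentiableAt ℝ f (lam * x.1, lam⁻¹ * x.2)) :
    fderiv ℝ (fun p => f (lam * p.1, lam⁻¹ * p.2)) x
      = (fderiv ℝ f (lam * x.1, lam⁻¹ * x.2)).comp (Lmap lam) := by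
  have h1 : HasFDerivAt f (fderiv ℝ f (Lmap lam x)) (Lmap lam x) := hf.hasFDerivAt
  have h2 : HasFDerivAt (f ∘ (Lmap lam))
      ((fderiv ℝ f (Lmap lam x)).comp (Lmap lam)) x :=
    h1.comp x (Lmap lam).hasFDerivAt
  exact h2.fderiv

lemma diffAt_comp (lam : ℝ) (f : ℝ × ℝ → ℂ) (x : ℝ × ℝ)
    (hf : DifferentiableAt ℝ f (lam * x.1, lam⁻¹ * x.2)) :
    DifferentiableAt ℝ (fun p => f (lam * p.1, lam⁻¹ * p.2)) x :=
  hf.comp x (Lmap lam).differentiableAt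

lemma pd1_comp (lam : ℝ) (f : ℝ × ℝ → ℂ) (x : ℝ × ℝ)
    (hf : DifferentiableAt ℝ f (lam * x.1, lam⁻¹ * x.2)) :
    pd1 (fun p => f (lam * p.1, lam⁻¹ * p.2)) x
      = (lam : ℂ) * pd1 f (lam * x.1, lam⁻¹ * x.2) := by
  rw [pd1, comp_fderiv lam f x hf]
  have hv : (Lmap lam) ((1:ℝ), (0:ℝ)) = lam • ((1:ℝ), (0:ℝ)) := by
    simp [Lmap, Prod.smul_def]
  rw [ContinuousLinearMap.comp_apply, hv, map_smul]
  simp [pd1, Complex.real_smul]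

lemma pd2_comp (lam : ℝ) (f : ℝ × ℝ → ℂ) (x : ℝ × ℝ)
    (hf : DifferentiableAt ℝ f (lam * x.1, lam⁻¹ * x.2)) :
    pd2 (fun p => f (lam * p.1, lam⁻¹ * p.2)) x
      = ((lam : ℂ))⁻¹ * pd2 f (lam * x.1, lam⁻¹ * x.2) := by
  rw [pd2, comp_fderiv lam f x hf]
  have hv : (Lmap lam) ((0:ℝ), (1:ℝ)) = lam⁻¹ • ((0:ℝ), (1:ℝ)) := by
    simp [Lmap, Prod.smul_def]
  rw [ContinuousLinearMap.comp_apply, hv, map_smul]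
  simp [pd2, Complex.real_smul]

lemma pd1_const_mul (c : ℂ) (g : ℝ × ℝ → ℂ) (x : ℝ × ℝ)
    (hg : DifferentiableAt ℝ g x) :
    pd1 (fun p => c * g p) x = c * pd1 g x := by
  rw [pd1, fderiv_const_mul hg c]; rfl

lemma pd2_const_mul (c : ℂ) (g : ℝ × ℝ → ℂ) (x : ℝ × ℝ)
    (hg : DifferentiableAt ℝ g x) :
    pd2 (fun p => c * g p) x = c * pd2 g x := by
  rw [pd2, fderiv_const_mul hg c]; rfl

lemma pd1_add_const (c : ℂ) (g : ℝ × ℝ → ℂ) (x : ℝ × ℝ) :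
    pd1 (fun p => g p + c) x = pd1 g x := by
  rw [pd1, fderiv_add_const]; rfl

lemma pd2_add_const (c : ℂ) (g : ℝ × ℝ → ℂ) (x : ℝ × ℝ) :
    pd2 (fun p => g p + c) x = pd2 g x := by
  rw [pd2, fderiv_add_const]; rfl

theorem mPLR_scaling_symmetry
    (D : Set (ℝ × ℝ)) (hD : IsOpen D) (q r qb rb φ : ℝ × ℝ → ℂ)
    (hq : DifferentiableOn ℝ q D) (hr : DifferentiableOn ℝ r D)
    (hqb : DifferentiableOn ℝ qb D) (hrb : DifferentiableOn ℝ rb D)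
    (hφ : DifferentiableOn ℝ φ D)
    (h : mPLR D q r qb rb φ)
    (α β : ℂ) (lam : ℝ) (hlam : 0 < lam) :
    mPLR {p : ℝ × ℝ | (lam * p.1, lam⁻¹ * p.2) ∈ D}
      (fun p => cpowR lam (2 * α + 1) * q (lam * p.1, lam⁻¹ * p.2))
      (fun p => cpowR lam (-(2 * α)) * r (lam * p.1, lam⁻¹ * p.2))
      (fun p => cpowR lam (2 * β) * qb (lam * p.1, lam⁻¹ * p.2))
      (fun p => cpowR lam (-(2 * β) - 1) * rb (lam * p.1, lam⁻¹ * p.2))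
      (fun p => φ (lam * p.1, lam⁻¹ * p.2) + (α - β) * Real.log lam) := by
  intro p hp
  have hp' : (lam * p.1, lam⁻¹ * p.2) ∈ D := hp
  set v : ℝ × ℝ := (lam * p.1, lam⁻¹ * p.2) with hv
  obtain ⟨e1, e2, e3, e4, e5, e6⟩ := h v hp'
  have hnh := hD.mem_nhds hp'
  have hqv : DifferentiableAt ℝ q v := hq.differentiableAt hnh
  have hrv : DifferentiableAt ℝ r v := hr.differentiableAt hnh
  have hqbv : DifferentiableAt ℝ qb v := hqb.differentiableAt hnh
  have hrbv : DifferentiableAt ℝ rb v := hrb.differentiableAt hnh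
  have hφv : DifferentiableAt ℝ φ v := hφ.differentiableAt hnh
  set l : ℂ := (Real.log lam : ℂ) with hldef
  have hl : (lam : ℂ) = Complex.exp l := by
    rw [hldef, ← Complex.ofReal_exp, Real.exp_log hlam]
  have hlinv : ((lam : ℂ))⁻¹ = Complex.exp (-l) := by
    rw [hl, Complex.exp_neg]
  have E1 : Complex.exp (2 * (φ v + (α - β) * (Real.log lam : ℂ)))
      = Complex.exp (2 * φ v) * Complex.exp (2 * ((α - β) * l)) := by
    rw [← Complex.exp_add]; congr 1; rw [hldef]; ring
  have E2 : Complex.exp (-2 * (φ v + (α - β) * (Real.log lam : ℂ)))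
      = Complex.exp (-2 * φ v) * Complex.exp (-(2 * ((α - β) * l))) := by
    rw [← Complex.exp_add]; congr 1; rw [hldef]; ring
  refine ⟨?_, ?_, ?_, ?_, ?_, ?_⟩
  · rw [pd2_const_mul _ _ _ (diffAt_comp lam q p hqv), pd2_comp lam q p hqv]
    simp only [← hv, e1, E1, mul_add, Complex.exp_add]
    have S1 : cpowR lam (2 * α + 1) * ((lam : ℂ))⁻¹
        = cpowR lam (2 * β) * Complex.exp (2 * ((α - β) * l)) := by
      rw [hlinv]; simp only [cpowR, ← hldef, ← Complex.exp_add]; congr 1; ring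
    linear_combination (-2 * qb v * Complex.exp (2 * φ v)) * S1
  · rw [pd2_const_mul _ _ _ (diffAt_comp lam r p hrv), pd2_comp lam r p hrv]
    simp only [← hv, e2, E2, mul_add, Complex.exp_add, neg_mul (2:ℂ) ((α - β) * l)]
    have S2 : cpowR lam (-(2 * α)) * ((lam : ℂ))⁻¹
        = cpowR lam (-(2 * β) - 1) * Complex.exp (-(2 * ((α - β) * l))) := by
      rw [hlinv]; simp only [cpowR, ← hldef, ← Complex.exp_add]; congr 1; ring
    linear_combination (2 * rb v * Complex.exp (-2 * φ v)) * S2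
  · rw [pd1_add_const, pd1_comp lam φ p hφv]
    simp only [← hv, e3]
    have S3 : cpowR lam (2 * α + 1) * cpowR lam (-(2 * α)) = (lam : ℂ) := by
      rw [hl]; simp only [cpowR, ← hldef, ← Complex.exp_add]; congr 1; ring
    linear_combination (2 * q v * r v) * S3.symm
  · rw [pd2_add_const, pd2_comp lam φ p hφv]
    simp only [← hv, e4]
    have S4 : cpowR lam (2 * β) * cpowR lam (-(2 * β) - 1) = ((lam : ℂ))⁻¹ := by
      rw [hlinv]; simp only [cpowR, ← hldef, ← Complex.exp_add]; congr 1; ring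
    linear_combination (-2 * qb v * rb v) * S4.symm
  · rw [pd1_const_mul _ _ _ (diffAt_comp lam qb p hqbv), pd1_comp lam qb p hqbv]
    simp only [← hv, e5, E2, mul_add, Complex.exp_add, neg_mul (2:ℂ) ((α - β) * l)]
    have S5 : cpowR lam (2 * β) * (lam : ℂ)
        = cpowR lam (2 * α + 1) * Complex.exp (-(2 * ((α - β) * l))) := by
      rw [hl]; simp only [cpowR, ← hldef, ← Complex.exp_add]; congr 1; ring
    linear_combination (-2 * q v * Complex.exp (-2 * φ v)) * S5
  · rw [pd1_const_mul _ _ _ (diffAt_comp lam rb p hrbv), pd1_comp lam rb p hrbv]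
    simp only [← hv, e6, E1, mul_add, Complex.exp_add]
    have S6 : cpowR lam (-(2 * β) - 1) * (lam : ℂ)
        = cpowR lam (-(2 * α)) * Complex.exp (2 * ((α - β) * l)) := by
      rw [hl]; simp only [cpowR, ← hldef, ← Complex.exp_add]; congr 1; ring
    linear_combination (2 * r v * Complex.exp (2 * φ v)) * S6
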